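/- Assume the SETUP with the f_i of class C², conditions G1–G3, H1–H5, and the distortion condition (D2) sup_i sup_{z∈E_i} |D²f_i(z)|/|f_{i1x}(z)| < C₀, where |D²f_i(z)| is the maximum of the absolute values of all second-order partial derivatives of f_{i1} and f_{i2} at z. Then there exists a constant c > 0, independent of i, such that for every i and all z₁, z₂ ∈ E_i, |∂f_{i1}/∂x (z₁)| ≤ c·|∂f_{i1}/∂x (z₂)|. -/

import Mathlib

open MeasureTheory Set Filter Topology

noncomputable section

/-- The unit square `Q = [0,1] × [0,1]`. -/
def Q2 : Set (ℝ × ℝ) := Set.Icc (0:ℝ) 1 ×ˢ Set.Icc (0:ℝ) 1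

/-- The full-height curvilinear rectangle `E_i` with left/right boundaries `l i`, `r i`. -/
def Erect (l r : ℕ → ℝ → ℝ) (i : ℕ) : Set (ℝ × ℝ) :=
  {p : ℝ × ℝ | p.2 ∈ Set.Icc (0:ℝ) 1 ∧ l i p.2 ≤ p.1 ∧ p.1 ≤ r i p.2}

/-- The full-width strip `S_i` with bottom/top boundaries `b i`, `t i`. -/
def Sstrip (b t : ℕ → ℝ → ℝ) (i : ℕ) : Set (ℝ × ℝ) :=
  {p : ℝ × ℝ | p.1 ∈ Set.Icc (0:ℝ) 1 ∧ b i p.1 ≤ p.2 ∧ p.2 ≤ t i p.1}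

/-- The map `f_i = (f_{i1}, f_{i2})` as a map `ℝ² → ℝ²`. -/
def fv (f1 f2 : ℕ → ℝ × ℝ → ℝ) (i : ℕ) (p : ℝ × ℝ) : ℝ × ℝ := (f1 i p, f2 i p)

/-- Partial derivative in the `x`-direction. -/
def Dx (g : ℝ × ℝ → ℝ) (z : ℝ × ℝ) : ℝ := deriv (fun s => g (s, z.2)) z.1

/-- Partial derivative in the `y`-direction. -/
def Dy (g : ℝ × ℝ → ℝ) (z : ℝ × ℝ) : ℝ := deriv (fun s => g (z.1, s)) z.2

/-- Absolute value of the Jacobian determinant of `f_i`. -/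
def Jac (f1 f2 : ℕ → ℝ × ℝ → ℝ) (i : ℕ) (z : ℝ × ℝ) : ℝ :=
  |Dx (f1 i) z * Dy (f2 i) z - Dy (f1 i) z * Dx (f2 i) z|

/-- Maximum of the absolute values of the second-order partial derivatives of `f_i`. -/
def D2max (f1 f2 : ℕ → ℝ × ℝ → ℝ) (i : ℕ) (z : ℝ × ℝ) : ℝ :=
  max (max (max |Dx (Dx (f1 i)) z| |Dy (Dx (f1 i)) z|)
           (max |Dy (Dy (f1 i)) z| |Dx (Dx (f2 i)) z|))
      (max |Dy (Dx (f2 i)) z| |Dy (Dy (f2 i)) z|)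

/-- `δ_{i,max}`: maximal width of a horizontal cross-section of `E_i`. -/
def deltaMax (l r : ℕ → ℝ → ℝ) (i : ℕ) : ℝ :=
  sSup ((fun y => r i y - l i y) '' Set.Icc (0:ℝ) 1)

/-- `δ_{i,min}`: minimal width of a horizontal cross-section of `E_i`. -/
def deltaMin (l r : ℕ → ℝ → ℝ) (i : ℕ) : ℝ :=
  sInf ((fun y => r i y - l i y) '' Set.Icc (0:ℝ) 1)

/-- `E_{i₀ … i_{n-1}} = E_{i₀} ∩ f_{i₀}⁻¹ (E_{i₁ … i_{n-1}})`. -/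
def Efin (l r : ℕ → ℝ → ℝ) (f1 f2 : ℕ → ℝ × ℝ → ℝ) : (ℕ → ℕ) → ℕ → Set (ℝ × ℝ)
  | _, 0 => Set.univ
  | idx, n + 1 =>
      Erect l r (idx 0) ∩ fv f1 f2 (idx 0) ⁻¹' Efin l r f1 f2 (fun k => idx (k + 1)) n

/-- `S_{i₋ₘ … i₋₁} = f_{i₋₁} (S_{i₋ₘ … i₋₂} ∩ E_{i₋₁})`; here `j 0 = i₋₁`, `j 1 = i₋₂`, …. -/
def Sfin (l r : ℕ → ℝ → ℝ) (f1 f2 : ℕ → ℝ × ℝ → ℝ) : (ℕ → ℕ) → ℕ → Set (ℝ × ℝ)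
  | _, 0 => Set.univ
  | j, m + 1 =>
      fv f1 f2 (j 0) '' (Sfin l r f1 f2 (fun k => j (k + 1)) m ∩ Erect l r (j 0))

/-- The topological attractor `Λ`, the union of all the unstable curves. -/
def Attractor (l r : ℕ → ℝ → ℝ) (f1 f2 : ℕ → ℝ × ℝ → ℝ) : Set (ℝ × ℝ) :=
  ⋃ j : ℕ → ℕ, ⋂ m : ℕ, Sfin l r f1 f2 j (m + 1)

lemma fderiv_apply_e1 (g : ℝ × ℝ → ℝ) (z : ℝ × ℝ) (hg : DifferentiableAt ℝ g z) :
    fderiv ℝ g z (1, 0) = Dx g z := by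
  have h1 : HasDerivAt (fun s : ℝ => (s, z.2)) ((1 : ℝ), (0 : ℝ)) z.1 :=
    (hasDerivAt_id z.1).prodMk (hasDerivAt_const z.1 z.2)
  have h2 : HasDerivAt (fun s : ℝ => g (s, z.2)) (fderiv ℝ g z (1, 0)) z.1 :=
    hg.hasFDerivAt.comp_hasDerivAt z.1 h1
  exact (h2.deriv).symm

lemma fderiv_apply_e2 (g : ℝ × ℝ → ℝ) (z : ℝ × ℝ) (hg : DifferentiableAt ℝ g z) :
    fderiv ℝ g z (0, 1) = Dy g z := by
  have h1 : HasDerivAt (fun s : ℝ => (z.1, s)) ((0 : ℝ), (1 : ℝ)) z.2 :=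
    (hasDerivAt_const z.2 z.1).prodMk (hasDerivAt_id z.2)
  have h2 : HasDerivAt (fun s : ℝ => g (z.1, s)) (fderiv ℝ g z (0, 1)) z.2 :=
    hg.hasFDerivAt.comp_hasDerivAt z.2 h1
  exact (h2.deriv).symm

lemma fderiv_Dx_apply (g : ℝ × ℝ → ℝ) (hg : ContDiff ℝ 2 g) (z v : ℝ × ℝ) :
    fderiv ℝ (Dx g) z v = v.1 * Dx (Dx g) z + v.2 * Dy (Dx g) z := by
  have hgd : Differentiable ℝ g := hg.differentiable two_ne_zero
  have hφ : ContDiff ℝ 1 (fun w => fderiv ℝ g w (1, 0)) :=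
    (hg.fderiv_right (by norm_num : (1 : WithTop ℕ∞) + 1 ≤ 2)).clm_apply contDiff_const
  have hφeq : (fun w => fderiv ℝ g w (1, 0)) = Dx g := by
    funext w; exact fderiv_apply_e1 g w (hgd w)
  have hDxd : Differentiable ℝ (Dx g) := hφeq ▸ hφ.differentiable one_ne_zero
  have hv : v = v.1 • ((1 : ℝ), (0 : ℝ)) + v.2 • ((0 : ℝ), (1 : ℝ)) := by
    simp [Prod.ext_iff]
  calc fderiv ℝ (Dx g) z v
      = fderiv ℝ (Dx g) z (v.1 • ((1 : ℝ), (0 : ℝ)) + v.2 • ((0 : ℝ), (1 : ℝ))) := by rw [← hv]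
    _ = v.1 * fderiv ℝ (Dx g) z (1, 0) + v.2 * fderiv ℝ (Dx g) z (0, 1) := by
        rw [map_add, ContinuousLinearMap.map_smul, ContinuousLinearMap.map_smul]; simp [smul_eq_mul]
    _ = v.1 * Dx (Dx g) z + v.2 * Dy (Dx g) z := by
        rw [fderiv_apply_e1 _ _ (hDxd z), fderiv_apply_e2 _ _ (hDxd z)]

lemma log_Dx_bound (g : ℝ × ℝ → ℝ) (hg : ContDiff ℝ 2 g) (C : ℝ)
    (γ γ' : ℝ → ℝ × ℝ) (hγ : ∀ s, HasDerivAt γ (γ' s) s) (a c : ℝ)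
    (hne : ∀ s ∈ Set.uIcc a c, Dx g (γ s) ≠ 0)
    (hbd : ∀ s ∈ Set.uIcc a c,
      |(γ' s).1| * |Dx (Dx g) (γ s)| + |(γ' s).2| * |Dy (Dx g) (γ s)|
        ≤ C * |Dx g (γ s)|) :
    abs (Real.log |Dx g (γ c)| - Real.log |Dx g (γ a)|) ≤ C * |c - a| := by
  have hgd : Differentiable ℝ g := hg.differentiable two_ne_zero
  have hφ : ContDiff ℝ 1 (fun w => fderiv ℝ g w (1, 0)) :=
    (hg.fderiv_right (by norm_num : (1 : WithTop ℕ∞) + 1 ≤ 2)).clm_apply contDiff_const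
  have hφeq : (fun w => fderiv ℝ g w (1, 0)) = Dx g := by
    funext w; exact fderiv_apply_e1 g w (hgd w)
  have hDxd : Differentiable ℝ (Dx g) := hφeq ▸ hφ.differentiable one_ne_zero
  set L : ℝ → ℝ := fun s => Real.log (Dx g (γ s)) with hL
  set L' : ℝ → ℝ := fun s => fderiv ℝ (Dx g) (γ s) (γ' s) / Dx g (γ s) with hL'
  have hder : ∀ s ∈ Set.uIcc a c, HasDerivWithinAt L (L' s) (Set.uIcc a c) s := by
    intro s hs
    have h1 : HasDerivAt (fun s => Dx g (γ s)) (fderiv ℝ (Dx g) (γ s) (γ' s)) s :=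
      (hDxd (γ s)).hasFDerivAt.comp_hasDerivAt s (hγ s)
    exact (h1.log (hne s hs)).hasDerivWithinAt
  have hbound : ∀ s ∈ Set.uIcc a c, ‖L' s‖ ≤ C := by
    intro s hs
    have h0 : 0 < |Dx g (γ s)| := abs_pos.mpr (hne s hs)
    rw [Real.norm_eq_abs, hL', abs_div, div_le_iff₀ h0]
    calc |fderiv ℝ (Dx g) (γ s) (γ' s)|
        ≤ |(γ' s).1| * |Dx (Dx g) (γ s)| + |(γ' s).2| * |Dy (Dx g) (γ s)| := by
          rw [fderiv_Dx_apply g hg]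
          exact (abs_add_le _ _).trans (by rw [abs_mul, abs_mul])
      _ ≤ C * |Dx g (γ s)| := hbd s hs
  have := (convex_uIcc a c).norm_image_sub_le_of_norm_hasDerivWithin_le hder hbound
    (Set.left_mem_uIcc) (Set.right_mem_uIcc)
  rw [Real.norm_eq_abs, Real.norm_eq_abs] at this
  calc abs (Real.log |Dx g (γ c)| - Real.log |Dx g (γ a)|) = |L c - L a| := by
        rw [hL]; simp only [Real.log_abs]
    _ ≤ C * |c - a| := this

set_option maxHeartbeats 1000000 in
/-- Corollary 5.3: under H1–H5 and D2, the partial derivative `f_{i1x}` has uniformly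
bounded ratios on each `E_i`, with a constant independent of `i`. -/
theorem bounded_distortion_f1x
    (α K₀ : ℝ) (hα0 : 0 < α) (hα1 : α < 1) (hK : 1 < K₀)
    (l r b t : ℕ → ℝ → ℝ) (f1 f2 : ℕ → ℝ × ℝ → ℝ)
    (hl : ∀ i, ContDiff ℝ 1 (l i)) (hr : ∀ i, ContDiff ℝ 1 (r i))
    (hb : ∀ i, ContDiff ℝ 1 (b i)) (ht : ∀ i, ContDiff ℝ 1 (t i))
    (hl' : ∀ i y, |deriv (l i) y| ≤ α) (hr' : ∀ i y, |deriv (r i) y| ≤ α)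
    (hb' : ∀ i x, |deriv (b i) x| ≤ α) (ht' : ∀ i x, |deriv (t i) x| ≤ α)
    (hlr : ∀ i, ∀ y ∈ Set.Icc (0:ℝ) 1, l i y < r i y)
    (hbt : ∀ i, ∀ x ∈ Set.Icc (0:ℝ) 1, b i x < t i x)
    (hEQ : ∀ i, Erect l r i ⊆ Q2) (hSQ : ∀ i, Sstrip b t i ⊆ Q2)
    (hfsm : ∀ i, ContDiff ℝ 2 (fv f1 f2 i))
    (hfinj : ∀ i, Set.InjOn (fv f1 f2 i) (Erect l r i))
    (hfim : ∀ i, fv f1 f2 i '' Erect l r i = Sstrip b t i)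
    (hJpos : ∀ i, ∀ z ∈ Erect l r i, 0 < Jac f1 f2 i z)
    (hG1E : ∀ i j, i ≠ j → interior (Erect l r i) ∩ interior (Erect l r j) = ∅)
    (hG1S : ∀ i j, i ≠ j → interior (Sstrip b t i) ∩ interior (Sstrip b t j) = ∅)
    (hG2 : volume (Q2 \ ⋃ i, interior (Erect l r i)) = 0)
    (hG3 : Summable (fun i => deltaMax l r i * Real.log (1 / deltaMin l r i)))
    (hH1 : ∀ i, ∀ z ∈ Erect l r i,
      |Dx (f2 i) z| + α * |Dy (f2 i) z| + α ^ 2 * |Dy (f1 i) z| ≤ α * |Dx (f1 i) z|)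
    (hH2 : ∀ i, ∀ z ∈ Erect l r i, K₀ ≤ |Dx (f1 i) z| - α * |Dy (f1 i) z|)
    (hH3 : ∀ i, ∀ z ∈ Erect l r i,
      |Dy (f1 i) z| + α * |Dy (f2 i) z| + α ^ 2 * |Dx (f2 i) z| ≤ α * |Dx (f1 i) z|)
    (hH4 : ∀ i, ∀ z ∈ Erect l r i, Jac f1 f2 i z * K₀ ≤ |Dx (f1 i) z| - α * |Dx (f2 i) z|)
    (hH5 : 1 / K₀ ^ 2 + α ^ 2 < 1)
    (C₀ : ℝ) (hC₀ : 0 < C₀)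
    (hD2 : ∀ i, ∀ z ∈ Erect l r i, D2max f1 f2 i z ≤ C₀ * |Dx (f1 i) z|)
    :
    ∃ c : ℝ, 0 < c ∧ ∀ i : ℕ, ∀ z₁ ∈ Erect l r i, ∀ z₂ ∈ Erect l r i,
      |Dx (f1 i) z₁| ≤ c * |Dx (f1 i) z₂| := by

  classical
  have hC0 : (0:ℝ) ≤ C₀ := hC₀.le
  refine ⟨Real.exp (4 * C₀), Real.exp_pos _, ?_⟩
  intro i z₁ hz₁ z₂ hz₂
  have hf1 : ContDiff ℝ 2 (f1 i) := contDiff_fst.comp (hfsm i)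
  -- positivity of |Dx f1| on E_i
  have hpos : ∀ z ∈ Erect l r i, (1:ℝ) < |Dx (f1 i) z| := by
    intro z hz
    have h2 := hH2 i z hz
    have : K₀ ≤ |Dx (f1 i) z| := by
      have : (0:ℝ) ≤ α * |Dy (f1 i) z| := by positivity
      linarith
    linarith
  have hne : ∀ z ∈ Erect l r i, Dx (f1 i) z ≠ 0 := by
    intro z hz
    have := hpos z hz
    intro h; rw [h] at this; simp only [abs_zero] at this; linarith
  -- second-derivative bounds
  have hDxx : ∀ z ∈ Erect l r i, |Dx (Dx (f1 i)) z| ≤ C₀ * |Dx (f1 i) z| := by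
    intro z hz
    refine le_trans ?_ (hD2 i z hz)
    exact le_trans (le_max_left _ _) (le_trans (le_max_left _ _) (le_max_left _ _))
  have hDyx : ∀ z ∈ Erect l r i, |Dy (Dx (f1 i)) z| ≤ C₀ * |Dx (f1 i) z| := by
    intro z hz
    refine le_trans ?_ (hD2 i z hz)
    exact le_trans (le_max_right _ _) (le_trans (le_max_left _ _) (le_max_left _ _))
  -- the left boundary lies in E_i
  have hwmem : ∀ y ∈ Set.Icc (0:ℝ) 1, (l i y, y) ∈ Erect l r i := by
    intro y hy
    exact ⟨hy, le_refl _, (hlr i y hy).le⟩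
  obtain ⟨hy₁, hlx₁, hxr₁⟩ := hz₁
  obtain ⟨hy₂, hlx₂, hxr₂⟩ := hz₂
  have hz₁' : z₁ ∈ Erect l r i := ⟨hy₁, hlx₁, hxr₁⟩
  have hz₂' : z₂ ∈ Erect l r i := ⟨hy₂, hlx₂, hxr₂⟩
  -- horizontal segment bound, used twice
  have hseg : ∀ z ∈ Erect l r i,
      abs (Real.log |Dx (f1 i) (z.1, z.2)| - Real.log |Dx (f1 i) (l i z.2, z.2)|)
        ≤ C₀ * |z.1 - l i z.2| := by
    intro z hz
    obtain ⟨hyz, hlz, hrz⟩ := hz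
    have hz' : z ∈ Erect l r i := ⟨hyz, hlz, hrz⟩
    have hmem : ∀ s ∈ Set.uIcc (l i z.2) z.1, (s, z.2) ∈ Erect l r i := by
      intro s hs
      rw [Set.uIcc_of_le hlz] at hs
      exact ⟨hyz, hs.1, hs.2.trans hrz⟩
    have hγ : ∀ s : ℝ, HasDerivAt (fun s : ℝ => (s, z.2)) ((1:ℝ), (0:ℝ)) s :=
      fun s => (hasDerivAt_id s).prodMk (hasDerivAt_const s z.2)
    have := log_Dx_bound (f1 i) hf1 C₀ (fun s => (s, z.2)) (fun _ => ((1:ℝ), (0:ℝ)))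
      hγ (l i z.2) z.1
      (fun s hs => hne _ (hmem s hs))
      (fun s hs => by
        have h1 := hDxx _ (hmem s hs)
        have h2 : (0:ℝ) ≤ |Dy (Dx (f1 i)) (s, z.2)| := abs_nonneg _
        simp only [abs_one, abs_zero, one_mul, zero_mul, add_zero]
        exact h1)
    exact this
  have B1 := hseg z₁ hz₁'
  have B3 := hseg z₂ hz₂'
  -- the curve along the left boundary
  have B2 : abs (Real.log |Dx (f1 i) (l i z₁.2, z₁.2)| - Real.log |Dx (f1 i) (l i z₂.2, z₂.2)|)
      ≤ (2 * C₀) * |z₁.2 - z₂.2| := by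
    have hmem : ∀ s ∈ Set.uIcc z₂.2 z₁.2, (l i s, s) ∈ Erect l r i := by
      intro s hs
      apply hwmem
      rcases Set.mem_uIcc.mp hs with ⟨h1, h2⟩ | ⟨h1, h2⟩
      · exact ⟨le_trans hy₂.1 h1, le_trans h2 hy₁.2⟩
      · exact ⟨le_trans hy₁.1 h1, le_trans h2 hy₂.2⟩
    have hγ : ∀ s : ℝ, HasDerivAt (fun s : ℝ => (l i s, s)) (deriv (l i) s, (1:ℝ)) s :=
      fun s => (((hl i).differentiable one_ne_zero s).hasDerivAt).prodMk (hasDerivAt_id s)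
    have := log_Dx_bound (f1 i) hf1 (2 * C₀) (fun s => (l i s, s))
      (fun s => (deriv (l i) s, (1:ℝ))) hγ z₂.2 z₁.2
      (fun s hs => hne _ (hmem s hs))
      (fun s hs => by
        have h1 := hDxx _ (hmem s hs)
        have h2 := hDyx _ (hmem s hs)
        have h3 := hl' i s
        have h4 : (0:ℝ) ≤ |Dx (Dx (f1 i)) (l i s, s)| := abs_nonneg _
        have h5 : (0:ℝ) ≤ |deriv (l i) s| := abs_nonneg _
        have h6 : |deriv (l i) s| * |Dx (Dx (f1 i)) (l i s, s)|
            ≤ |Dx (Dx (f1 i)) (l i s, s)| := by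
          have := mul_le_mul_of_nonneg_right (h3.trans hα1.le) h4
          linarith
        simp only [abs_one, one_mul]
        linarith)
    exact this
  -- coordinate bounds
  have hQ1 := hEQ i hz₁'
  have hQ2 := hEQ i hz₂'
  have hW1 := hEQ i (hwmem z₁.2 hy₁)
  have hW2 := hEQ i (hwmem z₂.2 hy₂)
  simp only [Q2, Set.mem_prod, Set.mem_Icc] at hQ1 hQ2 hW1 hW2
  have d1 : |z₁.1 - l i z₁.2| ≤ 1 := by
    rw [abs_le]; constructor <;> [linarith [hQ1.1.1, hW1.1.2]; linarith [hQ1.1.2, hW1.1.1]]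
  have d2 : |z₁.2 - z₂.2| ≤ 1 := by
    rw [abs_le]; constructor <;> [linarith [hy₁.1, hy₂.2]; linarith [hy₁.2, hy₂.1]]
  have d3 : |z₂.1 - l i z₂.2| ≤ 1 := by
    rw [abs_le]; constructor <;> [linarith [hQ2.1.1, hW2.1.2]; linarith [hQ2.1.2, hW2.1.1]]
  -- combine
  have hlog : Real.log |Dx (f1 i) z₁| ≤ Real.log |Dx (f1 i) z₂| + 4 * C₀ := by
    have e1 : (z₁.1, z₁.2) = z₁ := rfl
    have e2 : (z₂.1, z₂.2) = z₂ := rfl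
    rw [e1] at B1; rw [e2] at B3
    have a1 := abs_le.mp B1
    have a2 := abs_le.mp B2
    have a3 := abs_le.mp B3
    have b1 : C₀ * |z₁.1 - l i z₁.2| ≤ C₀ :=
      (mul_le_mul_of_nonneg_left d1 hC0).trans_eq (mul_one _)
    have b2 : (2 * C₀) * |z₁.2 - z₂.2| ≤ 2 * C₀ :=
      (mul_le_mul_of_nonneg_left d2 (by linarith)).trans_eq (mul_one _)
    have b3 : C₀ * |z₂.1 - l i z₂.2| ≤ C₀ :=
      (mul_le_mul_of_nonneg_left d3 hC0).trans_eq (mul_one _)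
    linarith [a1.2, a2.2, a3.1, a1.1, a2.1, a3.2]
  have p1 : (0:ℝ) < |Dx (f1 i) z₁| := lt_trans one_pos (hpos z₁ hz₁')
  have p2 : (0:ℝ) < |Dx (f1 i) z₂| := lt_trans one_pos (hpos z₂ hz₂')
  calc |Dx (f1 i) z₁| = Real.exp (Real.log |Dx (f1 i) z₁|) := (Real.exp_log p1).symm
    _ ≤ Real.exp (Real.log |Dx (f1 i) z₂| + 4 * C₀) := Real.exp_le_exp.mpr hlog
    _ = Real.exp (4 * C₀) * |Dx (f1 i) z₂| := by
        rw [Real.exp_add, Real.exp_log p2, mul_comm]
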